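/- There exists t₀ such that for every integer t ≥ t₀ and every t-uniform hypergraph G, the (t−1)-blown-up hypergraph H' = G^{(t−1)} has a vertex cover of size at most (2·ln t/(t−1) + 1/t) · |V(H')|. -/

import Mathlib

open Finset

set_option maxHeartbeats 1000000

/-- The vertex set of the `k`-blown-up hypergraph: all `k`-element subsets of the
vertex set contained in at least one edge. -/
def blowVertices {V : Type*} [DecidableEq V] (E : Finset (Finset V)) (k : ℕ) :
    Finset (Finset V) :=
  E.biUnion fun e => e.powersetCard k

set_option maxHeartbeats 1000000 in
lemma turan_analytic (t rr N : ℕ) (ht : 4300 ≤ t) (htN : t ≤ N)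
    (hrr : rr = ⌈((t:ℝ)-1)/(2*Real.log t)⌉₊) :
    ((rr * ((rr-1)^(t-1) * rr^(N-(t-1))) + rr^(N-1) : ℕ) : ℝ)
      ≤ (2 * Real.log t / ((t:ℝ)-1) + 1/(t:ℝ)) * (rr:ℝ)^N := by
  have htR : (4300:ℝ) ≤ (t:ℝ) := by exact_mod_cast ht
  have ht0 : (0:ℝ) < (t:ℝ) := by linarith
  have htm1 : (1:ℝ) ≤ (t:ℝ) - 1 := by linarith
  set T : ℝ := (t:ℝ) with hT
  set L : ℝ := Real.log T with hL
  have hL2 : 2 ≤ L := by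
    rw [hL, Real.le_log_iff_exp_le ht0]
    have h1 := Real.exp_one_lt_d9
    have h2 : Real.exp 2 = Real.exp 1 * Real.exp 1 := by
      rw [← Real.exp_add]; norm_num
    nlinarith [Real.exp_pos 1]
  have hL0 : 0 < L := by linarith
  have hr1n : 1 ≤ rr := by
    rw [hrr, Nat.one_le_iff_ne_zero, ← Nat.pos_iff_ne_zero, Nat.ceil_pos]
    apply div_pos <;> linarith
  have hRpos : (0:ℝ) < (rr:ℝ) := by exact_mod_cast hr1n
  have hR1 : (1:ℝ) ≤ (rr:ℝ) := by exact_mod_cast hr1n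
  have hrlowR : (T-1)/(2*L) ≤ (rr:ℝ) := by rw [hrr]; exact Nat.le_ceil _
  have hrupR : (rr:ℝ) ≤ (T-1)/(2*L) + 1 := by
    rw [hrr]
    have := Nat.ceil_lt_add_one (R := ℝ) (a := (T-1)/(2*L)) (by positivity)
    linarith
  clear_value T L
  clear hrr
  have h4L : 4*L^2 ≤ T - 1 := by
    have hT0 : (0:ℝ) ≤ T := ht0.le
    set q : ℝ := Real.sqrt T with hq
    have hq2 : q^2 = T := Real.sq_sqrt hT0
    have hq65 : (65:ℝ) ≤ q := by
      have hmono : Real.sqrt 4225 ≤ q := Real.sqrt_le_sqrt (by linarith)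
      have h4225 : Real.sqrt 4225 = 65 := by
        rw [show (4225:ℝ) = 65^2 by norm_num, Real.sqrt_sq (by norm_num : (0:ℝ) ≤ 65)]
      linarith
    have hqpos : 0 < q := by linarith
    set pq : ℝ := Real.sqrt q with hpq
    have hp2 : pq^2 = q := Real.sq_sqrt hqpos.le
    have hppos : 0 < pq := Real.sqrt_pos.mpr hqpos
    have hLq : L = 2 * Real.log q := by
      rw [hL, ← hq2, Real.log_pow]; push_cast; ring
    have hlq : Real.log q = 2 * Real.log pq := by
      rw [← hp2, Real.log_pow]; push_cast; ring
    have hlogp : Real.log pq ≤ pq := by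
      have := Real.log_le_sub_one_of_pos hppos; linarith
    have hL4 : L ≤ 4 * pq := by rw [hLq, hlq]; linarith
    have hLsq : L^2 ≤ 16 * q := by
      have h1 : L^2 ≤ (4*pq)^2 := pow_le_pow_left₀ hL0.le hL4 2
      have h2 : (4*pq)^2 = 16 * q := by rw [mul_pow, hp2]; norm_num
      linarith
    have h64 : 64*q ≤ T - 1 := by nlinarith [hq2, hq65]
    linarith
  have hratio : 2*L - 4*L^2/(T-1) ≤ (T-1)/(rr:ℝ) := by
    have hb : (rr:ℝ) ≤ (T-1+2*L)/(2*L) := by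
      have he1 : (T-1)/(2*L) + 1 = (T-1+2*L)/(2*L) := by field_simp
      linarith [hrupR]
    have h1 : (T-1)/((T-1+2*L)/(2*L)) ≤ (T-1)/(rr:ℝ) := by
      apply div_le_div_of_nonneg_left (by linarith) hRpos hb
    have h2 : (T-1)/((T-1+2*L)/(2*L)) = (T-1)*(2*L)/(T-1+2*L) := by
      rw [div_div_eq_mul_div]
    have h3 : 2*L - 4*L^2/(T-1) ≤ (T-1)*(2*L)/(T-1+2*L) := by
      have e1 : 2*L - 4*L^2/(T-1) = (2*L*(T-1) - 4*L^2)/(T-1) := by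
        field_simp
      rw [e1, div_le_div_iff₀ (by linarith) (by linarith)]
      nlinarith [pow_pos hL0 3, hL0, htm1]
    rw [h2] at h1
    linarith
  have hexpL : Real.exp L = T := by rw [hL]; exact Real.exp_log ht0
  have hexpb : Real.exp (-((T-1)/(rr:ℝ))) ≤ 3/T^2 := by
    have h2 : 4*L^2/(T-1) ≤ 1 := by
      rw [div_le_one (by linarith)]; exact h4L
    have h1 : -((T-1)/(rr:ℝ)) ≤ -(2*L) + 1 := by linarith [hratio]
    have h3 : Real.exp (-((T-1)/(rr:ℝ))) ≤ Real.exp (-(2*L)+1) := Real.exp_le_exp.mpr h1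
    have h5 : Real.exp (-(2*L)) = 1/(T^2) := by
      rw [show -(2*L) = -L + -L by ring, Real.exp_add, Real.exp_neg, hexpL]
      rw [one_div, sq, mul_inv]
    have h4 : Real.exp (-(2*L)+1) = (1/T^2) * Real.exp 1 := by
      rw [Real.exp_add, h5]
    have h6 := Real.exp_one_lt_d9
    have h7 : (1/T^2) * Real.exp 1 ≤ (1/T^2) * 3 := by
      apply mul_le_mul_of_nonneg_left (by linarith) (by positivity)
    calc Real.exp (-((T-1)/(rr:ℝ))) ≤ Real.exp (-(2*L)+1) := h3
      _ = (1/T^2) * Real.exp 1 := h4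
      _ ≤ (1/T^2) * 3 := h7
      _ = 3/T^2 := by ring
  have hR3 : (rr:ℝ) ≤ T/3 := by
    have h1 : (T-1)/(2*L) ≤ (T-1)/4 := by
      apply div_le_div_of_nonneg_left (by linarith) (by norm_num) (by linarith)
    linarith [hrupR]
  have ht2 : 2 ≤ t := by omega
  have hcore : (rr:ℝ) * (1 - 1/(rr:ℝ))^(t-1) ≤ 1/T := by
    have h1 : (0:ℝ) ≤ 1 - 1/(rr:ℝ) := by
      have : 1/(rr:ℝ) ≤ 1 := by rw [div_le_one hRpos]; exact hR1
      linarith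
    have h2 : 1 - 1/(rr:ℝ) ≤ Real.exp (-(1/(rr:ℝ))) := by
      have := Real.add_one_le_exp (-(1/(rr:ℝ))); linarith
    have h3 : (1-1/(rr:ℝ))^(t-1) ≤ Real.exp (-(1/(rr:ℝ)))^(t-1) := pow_le_pow_left₀ h1 h2 _
    have h4 : Real.exp (-(1/(rr:ℝ)))^(t-1) = Real.exp (-((T-1)/(rr:ℝ))) := by
      rw [← Real.exp_nat_mul]
      congr 1
      have hc : ((t-1 : ℕ):ℝ) = T - 1 := by
        rw [Nat.cast_sub (by omega), Nat.cast_one, ← hT]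
      rw [hc]; ring
    have h5 : (1-1/(rr:ℝ))^(t-1) ≤ 3/T^2 := by
      rw [h4] at h3; linarith [hexpb]
    calc (rr:ℝ) * (1-1/(rr:ℝ))^(t-1) ≤ (T/3) * (3/T^2) :=
          mul_le_mul hR3 h5 (pow_nonneg h1 _) (by linarith)
      _ = 1/T := by field_simp
  have piece1 : (rr:ℝ) * (((rr:ℝ)-1)^(t-1) * (rr:ℝ)^(N-(t-1))) ≤ (1/T) * (rr:ℝ)^N := by
    have hsplit : (rr:ℝ)^N = (rr:ℝ)^(t-1) * (rr:ℝ)^(N-(t-1)) := by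
      rw [← pow_add]; congr 1; omega
    have hfac : (rr:ℝ) - 1 = (rr:ℝ) * (1 - 1/(rr:ℝ)) := by field_simp
    have h1 : (0:ℝ) ≤ 1 - 1/(rr:ℝ) := by
      have : 1/(rr:ℝ) ≤ 1 := by rw [div_le_one hRpos]; exact hR1
      linarith
    have hcore' : (rr:ℝ) * ((rr:ℝ)-1)^(t-1) ≤ (1/T) * (rr:ℝ)^(t-1) := by
      rw [hfac, mul_pow]
      calc (rr:ℝ) * ((rr:ℝ)^(t-1) * (1-1/(rr:ℝ))^(t-1))
          = (rr:ℝ)^(t-1) * ((rr:ℝ) * (1-1/(rr:ℝ))^(t-1)) := by ring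
        _ ≤ (rr:ℝ)^(t-1) * (1/T) := by
            apply mul_le_mul_of_nonneg_left hcore (pow_nonneg hRpos.le _)
        _ = (1/T) * (rr:ℝ)^(t-1) := by ring
    calc (rr:ℝ) * (((rr:ℝ)-1)^(t-1) * (rr:ℝ)^(N-(t-1)))
        = ((rr:ℝ) * ((rr:ℝ)-1)^(t-1)) * (rr:ℝ)^(N-(t-1)) := by ring
      _ ≤ ((1/T) * (rr:ℝ)^(t-1)) * (rr:ℝ)^(N-(t-1)) := by
          apply mul_le_mul_of_nonneg_right hcore' (pow_nonneg hRpos.le _)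
      _ = (1/T) * (rr:ℝ)^N := by rw [hsplit]; ring
  have piece2 : (rr:ℝ)^(N-1) ≤ (2*L/(T-1)) * (rr:ℝ)^N := by
    have hNsplit : (rr:ℝ)^N = (rr:ℝ)^(N-1) * (rr:ℝ) := by
      rw [← pow_succ]; congr 1; omega
    have h1 : 1 ≤ 2*L/(T-1) * (rr:ℝ) := by
      rw [div_mul_eq_mul_div, le_div_iff₀ (by linarith)]
      have h2 := hrlowR
      rw [div_le_iff₀ (by linarith)] at h2
      nlinarith
    calc (rr:ℝ)^(N-1) = (rr:ℝ)^(N-1) * 1 := by ring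
      _ ≤ (rr:ℝ)^(N-1) * (2*L/(T-1) * (rr:ℝ)) := by
          apply mul_le_mul_of_nonneg_left h1 (pow_nonneg hRpos.le _)
      _ = 2*L/(T-1) * (rr:ℝ)^N := by rw [hNsplit]; ring
  have hcast : ((rr * ((rr-1)^(t-1) * rr^(N-(t-1))) + rr^(N-1) : ℕ) : ℝ)
      = (rr:ℝ) * (((rr:ℝ)-1)^(t-1) * (rr:ℝ)^(N-(t-1))) + (rr:ℝ)^(N-1) := by
    push_cast [Nat.cast_sub hr1n]
    ring
  rw [hcast]
  have hrhs : (2*L/(T-1) + 1/T) * (rr:ℝ)^N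
      = (1/T)*(rr:ℝ)^N + (2*L/(T-1))*(rr:ℝ)^N := by ring
  rw [hrhs]
  exact add_le_add piece1 piece2

/-- There is a `t₀` such that for every `t ≥ t₀` and every `t`-uniform hypergraph `G`,
the `(t-1)`-blown-up hypergraph `H' = G^{(t-1)}` has a vertex cover of size at most
`(2 ln t/(t-1) + 1/t)·|V(H')|`. -/
theorem stmt4 :
    ∃ t₀ : ℕ, ∀ t : ℕ, t₀ ≤ t →
      ∀ (V : Type) [Fintype V] [DecidableEq V] (E : Finset (Finset V)),
        (∀ e ∈ E, e.card = t) →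
        ∃ S : Finset (Finset V),
          S ⊆ blowVertices E (t - 1) ∧
          (∀ e ∈ E, ∃ s ∈ e.powersetCard (t - 1), s ∈ S) ∧
          (S.card : ℝ) ≤ (2 * Real.log t / ((t : ℝ) - 1) + 1 / (t : ℝ)) *
            ((blowVertices E (t - 1)).card : ℝ) := by
  classical
  refine ⟨4300, fun t ht V _ _ E hunif => ?_⟩
  rcases Finset.eq_empty_or_nonempty E with hEe | ⟨e₀, he₀⟩
  · exact ⟨∅, by simp, by simp [hEe], by simp [blowVertices, hEe]⟩
  -- basic numeric setup
  have htR : (4300:ℝ) ≤ (t:ℝ) := by exact_mod_cast ht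
  have ht2 : 2 ≤ t := by omega
  have ht0 : (0:ℝ) < (t:ℝ) := by linarith
  have htm1 : (1:ℝ) ≤ (t:ℝ) - 1 := by linarith
  have hL0 : (0:ℝ) < Real.log t := Real.log_pos (by linarith)
  set rr : ℕ := ⌈((t:ℝ)-1)/(2*Real.log t)⌉₊ with hrr
  have hr1n : 1 ≤ rr := by
    rw [hrr, Nat.one_le_iff_ne_zero, ← Nat.pos_iff_ne_zero, Nat.ceil_pos]
    apply div_pos <;> linarith
  haveI : NeZero rr := ⟨by omega⟩
  set N : ℕ := Fintype.card V with hN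
  clear_value rr N
  have htN : t ≤ N := by
    have h1 : e₀.card ≤ (univ : Finset V).card := Finset.card_le_card (Finset.subset_univ _)
    rw [Finset.card_univ, hunif e₀ he₀] at h1
    rwa [← hN] at h1
  -- the predicate defining the cover, for a labelling f
  set p : (V → ZMod rr) → Finset V → Prop :=
    fun f s => (∃ j, ∀ x ∈ s, f x ≠ j) ∨ (∑ x ∈ s, f x) = 0 with hp
  -- coverage: every edge has a (t-1)-subset satisfying p
  have hcover : ∀ (f : V → ZMod rr), ∀ e ∈ E, ∃ s ∈ e.powersetCard (t-1), p f s := by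
    intro f e he
    have hcard := hunif e he
    have hne : e.Nonempty := by rw [← Finset.card_pos, hcard]; omega
    by_cases hj : ∃ j, ∀ x ∈ e, f x ≠ j
    · obtain ⟨j, hjv⟩ := hj
      obtain ⟨x, hx⟩ := hne
      refine ⟨e.erase x, ?_, Or.inl ⟨j, fun y hy => hjv y (Finset.mem_of_mem_erase hy)⟩⟩
      rw [Finset.mem_powersetCard]
      exact ⟨Finset.erase_subset _ _, by rw [Finset.card_erase_of_mem hx, hcard]⟩
    · push_neg at hj
      obtain ⟨x, hx, hfx⟩ := hj (∑ y ∈ e, f y)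
      refine ⟨e.erase x, ?_, Or.inr ?_⟩
      · rw [Finset.mem_powersetCard]
        exact ⟨Finset.erase_subset _ _, by rw [Finset.card_erase_of_mem hx, hcard]⟩
      · have h2 : f x + ∑ y ∈ e.erase x, f y = f x :=
          (Finset.add_sum_erase e f hx).trans hfx.symm
        exact add_eq_left.mp h2
  -- counting helper: product-type counting
  have hcount : ∀ (s : Finset V) (B : Finset (ZMod rr)),
      (univ.filter (fun f : V → ZMod rr => ∀ x ∈ s, f x ∈ B)).card
        = B.card ^ s.card * rr ^ (N - s.card) := by
    intro s B
    have hfe : (univ.filter (fun f : V → ZMod rr => ∀ x ∈ s, f x ∈ B))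
        = Fintype.piFinset (fun x : V => if x ∈ s then B else univ) := by
      ext f
      simp only [Finset.mem_filter, Finset.mem_univ, true_and, Fintype.mem_piFinset]
      constructor
      · intro h x
        by_cases hx : x ∈ s
        · rw [if_pos hx]; exact h x hx
        · rw [if_neg hx]; exact Finset.mem_univ _
      · intro h x hx
        have := h x; rwa [if_pos hx] at this
    rw [hfe, Fintype.card_piFinset]
    have hcardite : ∀ x : V, (if x ∈ s then B else univ).card = if x ∈ s then B.card else rr := by
      intro x; by_cases hx : x ∈ s
      · rw [if_pos hx, if_pos hx]
      · rw [if_neg hx, if_neg hx, Finset.card_univ, ZMod.card]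
    simp only [hcardite]
    rw [← Finset.prod_filter_mul_prod_filter_not univ (· ∈ s)]
    have h1 : univ.filter (· ∈ s) = s := by ext x; simp
    have h2 : univ.filter (fun x => ¬ x ∈ s) = sᶜ := by ext x; simp
    rw [h1, h2]
    have h3 : ∏ x ∈ s, (if x ∈ s then B.card else rr) = B.card ^ s.card := by
      rw [Finset.prod_congr rfl (fun x hx => if_pos hx), Finset.prod_const]
    have h4 : ∏ x ∈ sᶜ, (if x ∈ s then B.card else rr) = rr ^ (N - s.card) := by
      rw [Finset.prod_congr rfl (fun x hx => if_neg (Finset.mem_compl.mp hx)),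
        Finset.prod_const, Finset.card_compl, hN]
    rw [h3, h4]
  -- counting the zero-sum labellings
  have hzero : ∀ s : Finset V, s.Nonempty →
      (univ.filter (fun f : V → ZMod rr => (∑ x ∈ s, f x) = 0)).card ≤ rr ^ (N - 1) := by
    intro s hs
    obtain ⟨x₀, hx₀⟩ := hs
    have htarget : (univ.filter (fun f : V → ZMod rr => f x₀ = 0)).card = rr ^ (N-1) := by
      have heq : (univ.filter (fun f : V → ZMod rr => f x₀ = 0))
          = (univ.filter (fun f : V → ZMod rr =>
              ∀ x ∈ ({x₀} : Finset V), f x ∈ ({0} : Finset (ZMod rr)))) := by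
        ext f; simp
      rw [heq, hcount]
      simp
    rw [← htarget]
    apply Finset.card_le_card_of_injOn (fun f => Function.update f x₀ 0)
    · intro f hf
      rw [Finset.mem_coe, Finset.mem_filter]
      exact ⟨Finset.mem_univ _, Function.update_self _ _ _⟩
    · intro f hf g hg h
      simp only [Finset.coe_filter, Set.mem_setOf_eq, Finset.mem_univ, true_and] at hf hg
      funext x
      by_cases hx : x = x₀
      · subst hx
        have hsf : f x + ∑ y ∈ s.erase x, f y = 0 := by
          rw [Finset.add_sum_erase s f hx₀]; exact hf
        have hsg : g x + ∑ y ∈ s.erase x, g y = 0 := by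
          rw [Finset.add_sum_erase s g hx₀]; exact hg
        have hoff : ∀ y ∈ s.erase x, f y = g y := by
          intro y hy
          have hne : y ≠ x := Finset.ne_of_mem_erase hy
          have := congrFun h y
          simpa only [Function.update_of_ne hne] using this
        rw [Finset.sum_congr rfl hoff] at hsf
        have := hsf.trans hsg.symm
        exact add_right_cancel this
      · have := congrFun h x
        simpa only [Function.update_of_ne hx] using this
  -- per-vertex counting bound
  have hPcount : ∀ s ∈ blowVertices E (t-1),
      (univ.filter (fun f : V → ZMod rr => p f s)).card
        ≤ rr * ((rr-1)^(t-1) * rr^(N-(t-1))) + rr^(N-1) := by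
    intro s hs
    simp only [blowVertices, Finset.mem_biUnion] at hs
    obtain ⟨e, he, hpe⟩ := hs
    obtain ⟨hsub, hscard⟩ := Finset.mem_powersetCard.mp hpe
    have hsne : s.Nonempty := by rw [← Finset.card_pos, hscard]; omega
    have hsubun : univ.filter (fun f : V → ZMod rr => p f s)
        ⊆ ((univ : Finset (ZMod rr)).biUnion fun j =>
            univ.filter (fun f : V → ZMod rr => ∀ x ∈ s, f x ∈ ({j}ᶜ : Finset (ZMod rr))))
          ∪ univ.filter (fun f : V → ZMod rr => (∑ x ∈ s, f x) = 0) := by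
      intro f hf
      rw [Finset.mem_filter] at hf
      rcases hf.2 with h | h
      · obtain ⟨j, hj⟩ := h
        refine Finset.mem_union_left _ (Finset.mem_biUnion.mpr ⟨j, Finset.mem_univ _, ?_⟩)
        rw [Finset.mem_filter]
        exact ⟨Finset.mem_univ _, fun x hx => by
          rw [Finset.mem_compl, Finset.mem_singleton]; exact hj x hx⟩
      · exact Finset.mem_union_right _ (Finset.mem_filter.mpr ⟨Finset.mem_univ _, h⟩)
    refine le_trans (Finset.card_le_card hsubun) (le_trans (Finset.card_union_le _ _) ?_)
    have hleft : ((univ : Finset (ZMod rr)).biUnion fun j =>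
        univ.filter (fun f : V → ZMod rr => ∀ x ∈ s, f x ∈ ({j}ᶜ : Finset (ZMod rr)))).card
        ≤ rr * ((rr-1)^(t-1) * rr^(N-(t-1))) := by
      refine le_trans (Finset.card_biUnion_le) ?_
      have hjcount : ∀ j : ZMod rr,
          (univ.filter (fun f : V → ZMod rr => ∀ x ∈ s, f x ∈ ({j}ᶜ : Finset (ZMod rr)))).card
            = (rr-1)^(t-1) * rr^(N-(t-1)) := by
        intro j
        rw [hcount s ({j}ᶜ), hscard]
        have hBc : ({j}ᶜ : Finset (ZMod rr)).card = rr - 1 := by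
          rw [Finset.card_compl, Finset.card_singleton, ZMod.card]
        rw [hBc]
      rw [Finset.sum_congr rfl (fun j _ => hjcount j), Finset.sum_const, Finset.card_univ,
        ZMod.card, smul_eq_mul]
    have hright := hzero s hsne
    exact add_le_add hleft hright
  -- average over all labellings
  have hswap : ∑ f ∈ (univ : Finset (V → ZMod rr)), ((blowVertices E (t-1)).filter (p f)).card
      = ∑ s ∈ blowVertices E (t-1), (univ.filter (fun f => p f s)).card := by
    simp only [Finset.card_filter]
    exact Finset.sum_comm
  set C' : ℕ := rr * ((rr-1)^(t-1) * rr^(N-(t-1))) + rr^(N-1) with hC'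
  have hsum : ∑ f ∈ (univ : Finset (V → ZMod rr)), ((blowVertices E (t-1)).filter (p f)).card
      ≤ (blowVertices E (t-1)).card * C' := by
    rw [hswap]
    have := Finset.sum_le_card_nsmul (blowVertices E (t-1))
      (fun s => (univ.filter (fun f => p f s)).card) C' hPcount
    simpa [smul_eq_mul] using this
  obtain ⟨f₀, -, hf₀⟩ := Finset.exists_min_image (univ : Finset (V → ZMod rr))
    (fun f => ((blowVertices E (t-1)).filter (p f)).card) ⟨(fun _ => 0), Finset.mem_univ _⟩
  have hmin : rr^N * ((blowVertices E (t-1)).filter (p f₀)).card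
      ≤ (blowVertices E (t-1)).card * C' := by
    refine le_trans ?_ hsum
    have h1 := Finset.card_nsmul_le_sum (univ : Finset (V → ZMod rr))
      (fun f => ((blowVertices E (t-1)).filter (p f)).card)
      (((blowVertices E (t-1)).filter (p f₀)).card)
      (fun f _ => hf₀ f (Finset.mem_univ f))
    rwa [Finset.card_univ, Fintype.card_fun, ZMod.card, smul_eq_mul, ← hN] at h1
  -- analytic bound
  have hC'le : ((C' : ℕ) : ℝ)
      ≤ (2 * Real.log t / ((t:ℝ)-1) + 1/(t:ℝ)) * (rr:ℝ)^N := by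
    rw [hC']
    exact turan_analytic t rr N ht htN hrr
  have hRpos : (0:ℝ) < (rr:ℝ) := by exact_mod_cast hr1n
  -- assemble
  refine ⟨(blowVertices E (t-1)).filter (p f₀), Finset.filter_subset _ _, ?_, ?_⟩
  · intro e he
    obtain ⟨s, hsp, hps⟩ := hcover f₀ e he
    refine ⟨s, hsp, Finset.mem_filter.mpr ⟨?_, hps⟩⟩
    simp only [blowVertices, Finset.mem_biUnion]
    exact ⟨e, he, hsp⟩
  · have hminR : ((rr:ℝ))^N * (((blowVertices E (t-1)).filter (p f₀)).card : ℝ)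
        ≤ ((blowVertices E (t-1)).card : ℝ) * ((C' : ℕ) : ℝ) := by
      exact_mod_cast hmin
    have hRN : (0:ℝ) < (rr:ℝ)^N := pow_pos hRpos N
    have h1 : ((rr:ℝ))^N * (((blowVertices E (t-1)).filter (p f₀)).card : ℝ)
        ≤ ((blowVertices E (t-1)).card : ℝ)
          * ((2 * Real.log t / ((t:ℝ)-1) + 1/(t:ℝ)) * (rr:ℝ)^N) :=
      le_trans hminR (mul_le_mul_of_nonneg_left hC'le (Nat.cast_nonneg _))
    have h2 : ((blowVertices E (t-1)).card : ℝ)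
          * ((2 * Real.log t / ((t:ℝ)-1) + 1/(t:ℝ)) * (rr:ℝ)^N)
        = ((2 * Real.log t / ((t:ℝ)-1) + 1/(t:ℝ))
            * ((blowVertices E (t-1)).card : ℝ)) * (rr:ℝ)^N := by ring
    have h3 : ((rr:ℝ))^N * (((blowVertices E (t-1)).filter (p f₀)).card : ℝ)
        = (((blowVertices E (t-1)).filter (p f₀)).card : ℝ) * (rr:ℝ)^N := by ring
    rw [h3, h2] at h1
    exact le_of_mul_le_mul_right h1 hRN
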